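/- arXiv:2504.10290 — 4 statements merged into one kernel-verified Lean document; each statement's English description precedes it below -/
import Mathlib

section
/- Let Δ ≥ ω ≥ u+1 ≥ 2 and let L = T_ω(Δ + u·⌊Δ/(ω−u)⌋). Then for every u-clique c in L, the set of common neighbors of the vertices of c has at most Δ elements; equivalently, L contains no copy of the complete split graph K_u ∨ I_{Δ+1}. -/
open SimpleGraph Finset Filter Topology

/-- `F` is contained in `G` as a subgraph: there is an injective graph homomorphism. -/
def Graph.Contains {β α : Type*} (F : SimpleGraph β) (G : SimpleGraph α) : Prop :=
  ∃ f : F →g G, Function.Injective f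

/-- The number of subgraphs of `G` isomorphic to `H`. -/
noncomputable def copyCount {β α : Type*} (H : SimpleGraph β) (G : SimpleGraph α) : ℕ :=
  {J : G.Subgraph | Nonempty (J.coe ≃g H)}.ncard

/-- The number of `u`-cliques of `G`. -/
noncomputable def kclique {α : Type*} (u : ℕ) (G : SimpleGraph α) : ℕ :=
  {s : Finset α | G.IsNClique u s}.ncard

/-- The set of dominating vertices of a graph. -/
def domSet {α : Type*} (H : SimpleGraph α) : Set α := {v | ∀ w, w ≠ v → H.Adj v w}

/-- The number of dominating vertices of a graph. -/
noncomputable def domCount {α : Type*} (H : SimpleGraph α) : ℕ := (domSet H).ncard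

/-- The set of dominating vertices of a subgraph `J`: vertices of `J` adjacent in `J`
to all other vertices of `J`. -/
def subDomSet {α : Type*} {G : SimpleGraph α} (J : G.Subgraph) : Set α :=
  {v ∈ J.verts | ∀ w ∈ J.verts, w ≠ v → J.Adj v w}

/-- The common neighborhood of a finite vertex set `c` in `G`. -/
def commonNbhd {α : Type*} (G : SimpleGraph α) (c : Finset α) : Set α :=
  {v | ∀ x ∈ c, G.Adj x v}

/-- `ω(c)`: the size of a largest clique of `G` containing `c`. -/
noncomputable def omegaC {α : Type*} (G : SimpleGraph α) (c : Finset α) : ℕ :=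
  sSup {m | ∃ s : Finset α, c ⊆ s ∧ G.IsNClique m s}

/-- `Δ(c)`: the number of common neighbors of `c` in `G`. -/
noncomputable def deltaC {α : Type*} (G : SimpleGraph α) (c : Finset α) : ℕ :=
  (commonNbhd G c).ncard

/-- `ω(J)`: the max of `ω(c)` over `u`-sets `c` of dominating vertices of the subgraph `J`. -/
noncomputable def omegaJ {α : Type*} (G : SimpleGraph α) (u : ℕ) (J : G.Subgraph) : ℕ :=
  sSup {m | ∃ c : Finset α, ↑c ⊆ subDomSet J ∧ c.card = u ∧ m = omegaC G c}

/-- `Δ(J)`: the max of `Δ(c)` over `u`-sets `c` of dominating vertices of the subgraph `J`. -/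
noncomputable def deltaJ {α : Type*} (G : SimpleGraph α) (u : ℕ) (J : G.Subgraph) : ℕ :=
  sSup {m | ∃ c : Finset α, ↑c ⊆ subDomSet J ∧ c.card = u ∧ m = deltaC G c}

/-- The complete split graph `K_u ∨ I_d`. -/
def completeSplitGraph (u d : ℕ) : SimpleGraph (Fin u ⊕ Fin d) where
  Adj x y := x ≠ y ∧ (x.isLeft ∨ y.isLeft)
  symm := ⟨by rintro x y ⟨h1, h2⟩; exact ⟨h1.symm, h2.symm⟩⟩
  loopless := ⟨by rintro x ⟨h, -⟩; exact h rfl⟩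

/-- Disjoint union of a family of graphs. -/
def sigmaGraph {ι : Type*} {β : ι → Type*} (G : ∀ i, SimpleGraph (β i)) :
    SimpleGraph (Σ i, β i) where
  Adj x y := ∃ (i : ι) (a b : β i), x = ⟨i, a⟩ ∧ y = ⟨i, b⟩ ∧ (G i).Adj a b
  symm := ⟨by rintro x y ⟨i, a, b, rfl, rfl, hab⟩; exact ⟨i, b, a, rfl, rfl, hab.symm⟩⟩
  loopless := ⟨by
    rintro x ⟨i, a, b, rfl, h2, hab⟩
    injection h2 with h1 h2'
    exact hab.ne h2'⟩

/-- `ex_u(p, H, F)`: maximum number of copies of `H` in an `F`-free graph with exactly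
`p` `u`-cliques (graphs taken on `Fin n` for some `n`). -/
noncomputable def exu {ι : Type*} {β : ι → Type*} (u p : ℕ) {h : ℕ} (H : SimpleGraph (Fin h))
    (F : ∀ i, SimpleGraph (β i)) : ℕ :=
  sSup {N | ∃ (n : ℕ) (G : SimpleGraph (Fin n)),
    (∀ i, ¬ Graph.Contains (F i) G) ∧ kclique u G = p ∧ _root_.copyCount H G = N}


lemma classcard (n ω r : ℕ) (hω : 0 < ω) (hr : r < ω) :
    n / ω ≤ (Finset.univ.filter (fun v : Fin n => (v : ℕ) % ω = r)).card := by
  rcases Nat.eq_zero_or_pos (n / ω) with h0 | hpos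
  · simp [h0]
  have hlt : ∀ k ∈ Finset.range (n / ω), r + k * ω < n := by
    intro k hk
    rw [Finset.mem_range] at hk
    calc r + k * ω < ω + k * ω := by omega
    _ = (k + 1) * ω := by ring
    _ ≤ (n / ω) * ω := Nat.mul_le_mul_right _ (by omega)
    _ ≤ n := Nat.div_mul_le_self n ω
  rw [← Finset.card_range (n / ω)]
  apply Finset.card_le_card_of_injOn
    (fun k => if h : k ∈ Finset.range (n/ω) then ⟨r + k * ω, hlt k h⟩
      else ⟨0, lt_of_le_of_lt (Nat.zero_le _) (hlt 0 (Finset.mem_range.mpr hpos))⟩)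
  · intro k hk
    simp only [Finset.mem_coe] at hk ⊢
    simp only [hk, dif_pos, Finset.mem_filter, Finset.mem_univ, true_and]
    simpa [Nat.mod_eq_of_lt hr] using Nat.add_mul_mod_self_right r k ω
  · intro a ha b hb hab
    simp only [Finset.coe_range, Set.mem_Iio] at ha hb
    simp only [Finset.mem_range.mpr ha, Finset.mem_range.mpr hb, dif_pos, Fin.mk.injEq] at hab
    exact Nat.eq_of_mul_eq_mul_right hω (by omega)

lemma part1 (u Δ ω n : ℕ) (hu : 1 ≤ u) (hω : u + 1 ≤ ω) (hΔ : ω ≤ Δ)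
    (hn : n = Δ + u * (Δ / (ω - u)))
    (c : Finset (Fin n))
    (hc : (turanGraph n ω).IsNClique u c) :
    (commonNbhd (turanGraph n ω) c).ncard ≤ Δ := by
  have hωpos : 0 < ω := by omega
  set R : Finset ℕ := c.image (fun v : Fin n => (v : ℕ) % ω) with hR
  have hinj : Set.InjOn (fun v : Fin n => (v : ℕ) % ω) ↑c := by
    intro x hx y hy hxy
    by_contra hne
    exact (hc.1 hx hy hne) hxy
  have hRcard : R.card = u := by
    rw [hR, Finset.card_image_of_injOn hinj, hc.2]
  have hRlt : ∀ r ∈ R, r < ω := by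
    intro r hr
    rw [hR, Finset.mem_image] at hr
    obtain ⟨x, -, rfl⟩ := hr
    exact Nat.mod_lt _ hωpos
  set T : Finset (Fin n) := Finset.univ.filter (fun v : Fin n => ¬ (v : ℕ) % ω ∈ R) with hT
  set S : Finset (Fin n) := Finset.univ.filter (fun v : Fin n => (v : ℕ) % ω ∈ R) with hS
  have hset : commonNbhd (turanGraph n ω) c = ↑T := by
    ext v
    simp only [commonNbhd, Set.mem_setOf_eq, Finset.mem_coe, hT, Finset.mem_filter,
      Finset.mem_univ, true_and, hR, Finset.mem_image]
    constructor
    · intro h hex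
      obtain ⟨x, hx, hxv⟩ := hex
      exact (h x hx) hxv
    · intro h x hx hadj
      exact h ⟨x, hx, hadj⟩
  have hScard : u * (n / ω) ≤ S.card := by
    have hdisj : (↑R : Set ℕ).PairwiseDisjoint
        (fun r => Finset.univ.filter (fun v : Fin n => (v : ℕ) % ω = r)) := by
      intro a _ b _ hab
      simp only [Finset.disjoint_filter]
      intro x _ hxa hxb
      exact hab (hxa ▸ hxb ▸ rfl)
    have hSeq : S = R.biUnion (fun r => Finset.univ.filter (fun v : Fin n => (v : ℕ) % ω = r)) := by
      ext v
      simp [hS]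
    rw [hSeq, Finset.card_biUnion hdisj]
    calc u * (n / ω) = R.card * (n / ω) := by rw [hRcard]
    _ ≤ ∑ r ∈ R, (Finset.univ.filter (fun v : Fin n => (v : ℕ) % ω = r)).card := by
        rw [← smul_eq_mul]
        exact Finset.card_nsmul_le_sum R _ _ (fun r hr => classcard n ω r hωpos (hRlt r hr))
  have hq : Δ / (ω - u) ≤ n / ω := by
    rw [Nat.le_div_iff_mul_le hωpos]
    have h1 : (Δ / (ω - u)) * (ω - u) ≤ Δ := Nat.div_mul_le_self Δ (ω - u)
    calc (Δ / (ω - u)) * ω = (Δ / (ω - u)) * (ω - u) + (Δ / (ω - u)) * u := by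
          rw [← Nat.mul_add]; congr 1; omega
    _ ≤ Δ + u * (Δ / (ω - u)) := by rw [Nat.mul_comm (Δ / (ω - u)) u]; omega
    _ = n := hn.symm
  have hsum : T.card + S.card = n := by
    rw [hT, hS]
    rw [Nat.add_comm]
    rw [Finset.card_filter_add_card_filter_not]
    simp
  have hS2 : u * (Δ / (ω - u)) ≤ S.card :=
    le_trans (Nat.mul_le_mul_left u hq) hScard
  rw [hset, Set.ncard_coe_finset]
  omega

theorem stmt5' (u Δ ω : ℕ) (hu : 1 ≤ u) (hω : u + 1 ≤ ω) (hΔ : ω ≤ Δ) :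
    (∀ c : Finset (Fin (Δ + u * (Δ / (ω - u)))),
      (turanGraph (Δ + u * (Δ / (ω - u))) ω).IsNClique u c →
        (commonNbhd (turanGraph (Δ + u * (Δ / (ω - u))) ω) c).ncard ≤ Δ) ∧
    ¬ Graph.Contains (completeSplitGraph u (Δ + 1))
      (turanGraph (Δ + u * (Δ / (ω - u))) ω) := by
  refine ⟨fun c hc => part1 u Δ ω _ hu hω hΔ rfl c hc, ?_⟩
  set n := Δ + u * (Δ / (ω - u)) with hn
  rintro ⟨f, hf⟩
  set c : Finset (Fin n) := Finset.univ.image (fun i : Fin u => f (Sum.inl i)) with hcdef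
  have hinjl : Function.Injective (fun i : Fin u => f (Sum.inl i)) :=
    fun i j h => Sum.inl_injective (hf (by exact h))
  have hclique : (turanGraph n ω).IsNClique u c := by
    constructor
    · intro x hx y hy hne
      simp only [hcdef, Finset.coe_image, Set.mem_image, Finset.coe_univ, Set.image_univ,
        Set.mem_range] at hx hy
      obtain ⟨i, rfl⟩ := hx
      obtain ⟨j, rfl⟩ := hy
      apply f.map_adj
      exact ⟨fun h => hne (by rw [h]), Or.inl rfl⟩
    · rw [hcdef, Finset.card_image_of_injective _ hinjl, Finset.card_univ, Fintype.card_fin]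
  have hle : (commonNbhd (turanGraph n ω) c).ncard ≤ Δ :=
    part1 u Δ ω n hu hω hΔ hn c hclique
  have hsub : ↑(Finset.univ.image (fun j : Fin (Δ + 1) => f (Sum.inr j)))
      ⊆ commonNbhd (turanGraph n ω) c := by
    intro v hv
    simp only [Finset.coe_image, Finset.coe_univ, Set.image_univ, Set.mem_range] at hv
    obtain ⟨j, rfl⟩ := hv
    intro x hx
    simp only [hcdef, Finset.mem_image, Finset.mem_univ, true_and] at hx
    obtain ⟨i, rfl⟩ := hx
    apply f.map_adj
    exact ⟨fun h => by simp at h, Or.inl rfl⟩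
  have hinjr : Function.Injective (fun j : Fin (Δ + 1) => f (Sum.inr j)) :=
    fun i j h => Sum.inr_injective (hf (by exact h))
  have hge : Δ + 1 ≤ (commonNbhd (turanGraph n ω) c).ncard := by
    calc Δ + 1 = (Finset.univ.image (fun j : Fin (Δ + 1) => f (Sum.inr j))).card := by
          rw [Finset.card_image_of_injective _ hinjr, Finset.card_univ, Fintype.card_fin]
    _ = (↑(Finset.univ.image (fun j : Fin (Δ + 1) => f (Sum.inr j))) : Set (Fin n)).ncard :=
          (Set.ncard_coe_finset _).symm
    _ ≤ (commonNbhd (turanGraph n ω) c).ncard := Set.ncard_le_ncard hsub (Set.toFinite _)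
  omega

/-- in `L = T_ω(Δ + u⌊Δ/(ω−u)⌋)`, every `u`-clique has at most `Δ`
common neighbors; equivalently `L` contains no `K_u ∨ I_{Δ+1}`. -/
theorem stmt5 (u Δ ω : ℕ) (hu : 1 ≤ u) (hω : u + 1 ≤ ω) (hΔ : ω ≤ Δ) :
    (∀ c : Finset (Fin (Δ + u * (Δ / (ω - u)))),
      (turanGraph (Δ + u * (Δ / (ω - u))) ω).IsNClique u c →
        (commonNbhd (turanGraph (Δ + u * (Δ / (ω - u))) ω) c).ncard ≤ Δ) ∧
    ¬ Graph.Contains (completeSplitGraph u (Δ + 1))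
      (turanGraph (Δ + u * (Δ / (ω - u))) ω) := by
  exact stmt5' u Δ ω hu hω hΔ
end

section
/- In the Turán graph T_ω(n) where ω divides n (so all parts have equal size n/ω), for every u-clique c (with u ≤ ω), the subgraph induced on the common neighborhood of c is isomorphic to T_{ω−u}(n − un/ω). -/
open SimpleGraph Finset Filter Topology

/-- in `T_ω(n)` with `ω ∣ n`, the common neighborhood of any `u`-clique
induces a graph isomorphic to `T_{ω−u}(n − u·n/ω)`. -/
theorem stmt6 (u ω n : ℕ) (hω : 0 < ω) (hu : u ≤ ω) (hdvd : ω ∣ n)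
    (c : Finset (Fin n)) (hc : (turanGraph n ω).IsNClique u c) :
    Nonempty (((turanGraph n ω).induce (commonNbhd (turanGraph n ω) c)) ≃g
      turanGraph (n - u * (n / ω)) (ω - u)) := by
  set G := turanGraph n ω with hG
  set k := n / ω with hk
  set m := ω - u with hm
  have hωk : ω * k = n := Nat.mul_div_cancel' hdvd
  have hcard : n - u * k = k * m := by
    rw [← hωk, ← Nat.sub_mul, Nat.mul_comm]
  let res : Fin n → Fin ω := fun v => ⟨(v : ℕ) % ω, Nat.mod_lt _ hω⟩
  let S : Finset (Fin ω) := c.image res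
  have hadj : ∀ v w : Fin n, G.Adj v w ↔ (v : ℕ) % ω ≠ (w : ℕ) % ω := by
    intro v w; rw [hG, turanGraph]
  have hresS : ∀ v : Fin n, v ∈ commonNbhd G c ↔ res v ∉ S := by
    intro v
    simp only [commonNbhd, Set.mem_setOf_eq, S, Finset.mem_image]
    constructor
    · rintro h ⟨x, hx, hxv⟩
      exact ((hadj x v).1 (h x hx)) (congrArg Fin.val hxv)
    · intro h x hx
      exact (hadj x v).2 fun hcon => h ⟨x, hx, Fin.ext hcon⟩
  have hScard : S.card = u := by
    rw [Finset.card_image_of_injOn, hc.2]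
    intro x hx y hy hxy
    by_contra hne
    exact (hadj x y).1 (hc.1 hx hy hne) (congrArg Fin.val hxy)
  have heBcard : Fintype.card {r : Fin ω // r ∉ S} = m := by
    have := Fintype.card_subtype_compl (fun r : Fin ω => r ∈ S)
    simp only [Fintype.card_coe, hScard, Fintype.card_fin] at this
    exact this
  let eB : {r : Fin ω // r ∉ S} ≃ Fin m := Fintype.equivFinOfCardEq heBcard
  have hdivlt : ∀ v : Fin n, (v : ℕ) / ω < k :=
    fun v => Nat.div_lt_div_of_lt_of_dvd hdvd v.isLt
  have hinvlt : ∀ (r : Fin ω) (i : Fin k), (r : ℕ) + ω * (i : ℕ) < n := by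
    intro r i
    calc (r : ℕ) + ω * i < ω + ω * i := by omega
    _ = ω * (i + 1) := by ring
    _ ≤ ω * k := Nat.mul_le_mul_left _ i.isLt
    _ = n := hωk
  have hmodinv : ∀ (r : Fin ω) (i : Fin k), ((r : ℕ) + ω * i) % ω = r := by
    intro r i
    rw [Nat.add_mul_mod_self_left, Nat.mod_eq_of_lt r.isLt]
  let eA : ↥(commonNbhd G c) ≃ {r : Fin ω // r ∉ S} × Fin k :=
    { toFun := fun v => (⟨res v.1, (hresS v.1).1 v.2⟩, ⟨(v.1 : ℕ) / ω, hdivlt v.1⟩)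
      invFun := fun p =>
        ⟨⟨(p.1.1 : ℕ) + ω * (p.2 : ℕ), hinvlt p.1.1 p.2⟩, by
          refine (hresS _).2 ?_
          have : res ⟨(p.1.1 : ℕ) + ω * (p.2 : ℕ), hinvlt p.1.1 p.2⟩ = p.1.1 :=
            Fin.ext (hmodinv p.1.1 p.2)
          rw [this]; exact p.1.2⟩
      left_inv := by
        rintro ⟨v, hv⟩
        apply Subtype.ext
        apply Fin.ext
        exact Nat.mod_add_div _ _
      right_inv := by
        rintro ⟨⟨r, hr⟩, i⟩
        refine Prod.ext (Subtype.ext (Fin.ext ?_)) (Fin.ext ?_)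
        · exact hmodinv r i
        · show ((r : ℕ) + ω * i) / ω = i
          rw [Nat.add_mul_div_left _ _ hω, Nat.div_eq_of_lt r.isLt, Nat.zero_add] }
  let E : ↥(commonNbhd G c) ≃ Fin (n - u * k) :=
    (((eA.trans (Equiv.prodCongr eB (Equiv.refl (Fin k)))).trans
      (Equiv.prodComm (Fin m) (Fin k))).trans finProdFinEquiv).trans
      (finCongr hcard.symm)
  have hEval : ∀ v : ↥(commonNbhd G c),
      (E v : ℕ) = (eB ⟨res v.1, (hresS v.1).1 v.2⟩ : ℕ) + m * ((v.1 : ℕ) / ω) := by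
    intro v
    simp [E, eA, finProdFinEquiv]
  have hEmod : ∀ v : ↥(commonNbhd G c),
      (E v : ℕ) % m = (eB ⟨res v.1, (hresS v.1).1 v.2⟩ : ℕ) := by
    intro v
    rw [hEval, Nat.add_mul_mod_self_left, Nat.mod_eq_of_lt (eB _).isLt]
  refine ⟨{ toEquiv := E, map_rel_iff' := ?_ }⟩
  intro a b
  have hT : ∀ x y : Fin (n - u * k), (turanGraph (n - u * k) m).Adj x y ↔
      (x : ℕ) % m ≠ (y : ℕ) % m := fun x y => Iff.rfl
  simp only [Equiv.coe_fn_mk, comap_adj, Function.Embedding.coe_subtype]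
  rw [hT, hEmod, hEmod]
  constructor
  · intro h
    refine (hadj a.1 b.1).2 fun hcon => h ?_
    have hsub : (⟨res a.1, (hresS a.1).1 a.2⟩ : {r // r ∉ S}) = ⟨res b.1, (hresS b.1).1 b.2⟩ :=
      Subtype.ext (Fin.ext hcon)
    rw [hsub]
  · intro h hcon
    have h1 : eB ⟨res a.1, (hresS a.1).1 a.2⟩ = eB ⟨res b.1, (hresS b.1).1 b.2⟩ :=
      Fin.ext hcon
    have h2 := eB.injective h1
    exact (hadj a.1 b.1).1 h (congrArg Fin.val (congrArg Subtype.val h2))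
end

section
/- Let u ≥ 1, let H be a graph with dom(H) ≥ u, and let Δ ≥ ω with ω − u ≥ ω_0(H^{↓u}). If G is a graph containing neither K_u ∨ I_{Δ+1} nor K_{ω+1} as a subgraph, then N(H,G) ≤ N(H^{↓u}, T_{ω−u}(Δ)) · k^u(G) / C(dom(H), u). -/
open SimpleGraph Finset Filter Topology

/-! ### Auxiliary lemmas -/

lemma subgraph_finite {V : Type*} [Finite V] (G : SimpleGraph V) : Finite G.Subgraph := by
  have hinj : Function.Injective (fun J : G.Subgraph => (J.verts, J.Adj)) := by
    intro J K hJK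
    rw [Prod.ext_iff] at hJK
    exact SimpleGraph.Subgraph.ext hJK.1 hJK.2
  exact Finite.of_injective _ hinj

lemma dom_adj {α : Type*} {H : SimpleGraph α} {x : α} (hx : x ∈ domSet H) (y : α) :
    H.Adj x y ↔ y ≠ x :=
  ⟨fun h => h.ne', fun h => hx y h⟩

lemma domSet_map {A B : Type*} {H1 : SimpleGraph A} {H2 : SimpleGraph B} (e : H1 ≃g H2) {v : A}
    (hv : v ∈ domSet H1) : e v ∈ domSet H2 := by
  intro w hw
  have h1 : e.symm w ≠ v := by
    intro hcon
    apply hw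
    rw [← hcon]; simp
  have h2 := e.map_adj_iff.2 (hv _ h1)
  simpa using h2

lemma domSet_image {A B : Type*} {H1 : SimpleGraph A} {H2 : SimpleGraph B} (e : H1 ≃g H2) :
    ⇑e '' domSet H1 = domSet H2 := by
  ext x
  constructor
  · rintro ⟨v, hv, rfl⟩; exact domSet_map e hv
  · intro hx; exact ⟨e.symm x, domSet_map e.symm hx, by simp⟩

lemma domCount_eq_of_iso {A B : Type*} {H1 : SimpleGraph A} {H2 : SimpleGraph B} (e : H1 ≃g H2) :
    domCount H1 = domCount H2 := by
  rw [domCount, domCount, ← domSet_image e, Set.ncard_image_of_injective _ e.injective]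

noncomputable def mapCoeIso {α α' : Type*} {G : SimpleGraph α} {G' : SimpleGraph α'} (f : G →g G')
    (hf : Function.Injective f) (J : G.Subgraph) : (SimpleGraph.Subgraph.map f J).coe ≃g J.coe where
  toEquiv := (Equiv.Set.image f J.verts hf).symm
  map_rel_iff' := by
    rintro ⟨a, ha⟩ ⟨b, hb⟩
    have key : ∀ p : ↥(f '' J.verts), f ↑((Equiv.Set.image f J.verts hf).symm p) = ↑p := by
      intro p
      have := congrArg Subtype.val ((Equiv.Set.image f J.verts hf).apply_symm_apply p)
      simpa only [Equiv.Set.image_apply] using this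
    simp only [SimpleGraph.Subgraph.coe_adj, Equiv.coe_fn_mk]
    constructor
    · intro hadj
      exact ⟨_, _, hadj, key ⟨a, ha⟩, key ⟨b, hb⟩⟩
    · rintro ⟨x, y, hxy, hx, hy⟩
      have hxa : ↑((Equiv.Set.image f J.verts hf).symm ⟨a, ha⟩) = x :=
        hf (by rw [key ⟨a, ha⟩, hx])
      have hyb : ↑((Equiv.Set.image f J.verts hf).symm ⟨b, hb⟩) = y :=
        hf (by rw [key ⟨b, hb⟩, hy])
      convert hxy using 2
      exacts [hxa, hyb]

lemma subgraph_map_injective {α α' : Type*} {G : SimpleGraph α} {G' : SimpleGraph α'}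
    (f : G →g G') (hf : Function.Injective f) :
    Function.Injective (SimpleGraph.Subgraph.map f) := by
  intro J K hJK
  have hv : f '' J.verts = f '' K.verts := congrArg SimpleGraph.Subgraph.verts hJK
  have hA : ∀ x y, J.Adj x y ↔ K.Adj x y := by
    intro x y
    have := congrArg SimpleGraph.Subgraph.Adj hJK
    have h2 : Relation.Map J.Adj f f (f x) (f y) ↔ Relation.Map K.Adj f f (f x) (f y) :=
      iff_of_eq (congrFun (congrFun this (f x)) (f y))
    constructor
    · intro hxy
      obtain ⟨x', y', hxy', hx', hy'⟩ := h2.1 ⟨x, y, hxy, rfl, rfl⟩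
      rwa [hf hx', hf hy'] at hxy'
    · intro hxy
      obtain ⟨x', y', hxy', hx', hy'⟩ := h2.2 ⟨x, y, hxy, rfl, rfl⟩
      rwa [hf hx', hf hy'] at hxy'
  exact SimpleGraph.Subgraph.ext ((Set.image_eq_image hf).1 hv) (by ext x y; exact hA x y)

lemma copyCount_le_of_injhom {β α α' : Type*} [Finite α'] (H : SimpleGraph β)
    {G : SimpleGraph α} {G' : SimpleGraph α'} (f : G →g G') (hf : Function.Injective f) :
    _root_.copyCount H G ≤ _root_.copyCount H G' := by
  have := subgraph_finite G'
  apply Set.ncard_le_ncard_of_injOn (SimpleGraph.Subgraph.map f)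
  · rintro J ⟨e⟩
    exact ⟨(mapCoeIso f hf J).trans e⟩
  · exact (subgraph_map_injective f hf).injOn

lemma copyCount_eq_of_iso_right {β α α' : Type*} [Finite α] [Finite α'] (H : SimpleGraph β)
    {G : SimpleGraph α} {G' : SimpleGraph α'} (e : G ≃g G') :
    _root_.copyCount H G = _root_.copyCount H G' :=
  le_antisymm (copyCount_le_of_injhom H e.toHom e.injective)
    (copyCount_le_of_injhom H e.symm.toHom e.symm.injective)

noncomputable def domSwapIso {h : ℕ} (H : SimpleGraph (Fin h)) (D D' : Finset (Fin h))
    (hD : ↑D ⊆ domSet H) (hD' : ↑D' ⊆ domSet H) (hcard : D.card = D'.card) :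
    H.induce ((↑D' : Set (Fin h))ᶜ) ≃g H.induce ((↑D : Set (Fin h))ᶜ) := by
  classical
  set A := D \ D' with hA
  set B := D' \ D with hB
  have hABcard : A.card = B.card := Finset.card_sdiff_comm hcard
  have π : ↥A ≃ ↥B := Finset.equivOfCardEq hABcard
  set f : Fin h → Fin h := fun x =>
    if hx : x ∈ A then ↑(π ⟨x, hx⟩) else if hx' : x ∈ B then ↑(π.symm ⟨x, hx'⟩) else x with hf
  have hdisj : ∀ x, x ∈ A → x ∉ B := by
    intro x hxA hxB
    exact (Finset.mem_sdiff.1 hxB).2 (Finset.mem_sdiff.1 hxA).1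
  have hff : Function.Involutive f := by
    intro x
    by_cases hx : x ∈ A
    · have h1 : f x = ↑(π ⟨x, hx⟩) := dif_pos hx
      have h2 : (↑(π ⟨x, hx⟩) : Fin h) ∈ B := (π ⟨x, hx⟩).2
      have h3 : (↑(π ⟨x, hx⟩) : Fin h) ∉ A := fun hc => hdisj _ hc h2
      rw [h1, hf]
      simp only [dif_neg h3, dif_pos h2]
      rw [Subtype.coe_eta, Equiv.symm_apply_apply]
    · by_cases hx' : x ∈ B
      · have h1 : f x = ↑(π.symm ⟨x, hx'⟩) := by rw [hf]; simp only [dif_neg hx, dif_pos hx']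
        have h2 : (↑(π.symm ⟨x, hx'⟩) : Fin h) ∈ A := (π.symm ⟨x, hx'⟩).2
        rw [h1, hf]
        simp only [dif_pos h2]
        rw [Subtype.coe_eta, Equiv.apply_symm_apply]
      · have h1 : f x = x := by rw [hf]; simp only [dif_neg hx, dif_neg hx']
        rw [h1, h1]
  have hfix : ∀ x, x ∉ A → x ∉ B → f x = x := by
    intro x hx hx'
    rw [hf]; simp only [dif_neg hx, dif_neg hx']
  have hAD : ∀ x, x ∈ A → x ∈ domSet H := fun x hx => hD (Finset.mem_sdiff.1 hx).1
  have hBD : ∀ x, x ∈ B → x ∈ domSet H := fun x hx => hD' (Finset.mem_sdiff.1 hx).1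
  have hfdom : ∀ x, (x ∈ A ∨ x ∈ B) → x ∈ domSet H ∧ f x ∈ domSet H := by
    intro x hx
    rcases hx with hx | hx
    · refine ⟨hAD x hx, ?_⟩
      have : f x = ↑(π ⟨x, hx⟩) := dif_pos hx
      rw [this]; exact hBD _ (π ⟨x, hx⟩).2
    · refine ⟨hBD x hx, ?_⟩
      by_cases hxA : x ∈ A
      · have : f x = ↑(π ⟨x, hxA⟩) := dif_pos hxA
        rw [this]; exact hBD _ (π ⟨x, hxA⟩).2
      · have : f x = ↑(π.symm ⟨x, hx⟩) := by rw [hf]; simp only [dif_neg hxA, dif_pos hx]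
        rw [this]; exact hAD _ (π.symm ⟨x, hx⟩).2
  set σ : Equiv.Perm (Fin h) := hff.toPerm f with hσ
  have hσinj : Function.Injective f := hff.injective
  have auto : ∀ x y, H.Adj (f x) (f y) ↔ H.Adj x y := by
    intro x y
    by_cases hx : x ∈ A ∨ x ∈ B
    · obtain ⟨h1, h2⟩ := hfdom x hx
      rw [dom_adj h2, dom_adj h1, ne_eq, ne_eq, hσinj.eq_iff]
    · by_cases hy : y ∈ A ∨ y ∈ B
      · obtain ⟨h1, h2⟩ := hfdom y hy
        rw [adj_comm, H.adj_comm x y, dom_adj h2, dom_adj h1, ne_eq, ne_eq, hσinj.eq_iff]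
      · push_neg at hx hy
        rw [hfix x hx.1 hx.2, hfix y hy.1 hy.2]
  have hmem : ∀ x : Fin h, x ∈ ((↑D' : Set (Fin h))ᶜ) ↔ f x ∈ ((↑D : Set (Fin h))ᶜ) := by
    intro x
    simp only [Set.mem_compl_iff, Finset.mem_coe]
    constructor
    · intro hx hc
      by_cases hxA : x ∈ A
      · have : f x = ↑(π ⟨x, hxA⟩) := dif_pos hxA
        rw [this] at hc
        exact (Finset.mem_sdiff.1 (π ⟨x, hxA⟩).2).2 hc
      · have hxB : x ∉ B := fun hxB => hx (Finset.mem_sdiff.1 hxB).1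
        rw [hfix x hxA hxB] at hc
        exact hxA (Finset.mem_sdiff.mpr ⟨hc, hx⟩)
    · intro hx hc
      by_cases hxB : x ∈ B
      · have hxA : x ∉ A := fun hxA => hdisj _ hxA hxB
        have : f x = ↑(π.symm ⟨x, hxB⟩) := by rw [hf]; simp only [dif_neg hxA, dif_pos hxB]
        rw [this] at hx
        exact hx (Finset.mem_sdiff.1 (π.symm ⟨x, hxB⟩).2).1
      · by_cases hxA : x ∈ A
        · exact (Finset.mem_sdiff.1 hxA).2 hc
        · rw [hfix x hxA hxB] at hx
          exact hxB (Finset.mem_sdiff.mpr ⟨hc, hx⟩)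
  exact
    { toEquiv := σ.subtypeEquiv hmem
      map_rel_iff' := by
        intro a b
        simp only [Equiv.subtypeEquiv_apply, comap_adj, Function.Embedding.coe_subtype]
        exact auto ↑a ↑b }

/-! ### The restriction construction -/

lemma commonNbhd_not_mem {α : Type*} {G : SimpleGraph α} {c : Finset α} {v : α}
    (hv : v ∈ commonNbhd G c) : v ∉ c :=
  fun hvc => G.irrefl (hv v hvc)

lemma verts_mem_commonNbhd {α : Type*} {G : SimpleGraph α} {c : Finset α} {J : G.Subgraph}
    (hJ : ↑c ⊆ subDomSet J) {v : α} (hv : v ∈ J.verts) (hvc : v ∉ c) :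
    v ∈ commonNbhd G c := by
  intro x hx
  exact J.adj_sub ((hJ hx).2 v hv (fun heq => hvc (heq ▸ hx)))

def restrictSub {α : Type*} {G : SimpleGraph α} (c : Finset α) (J : G.Subgraph) :
    (G.induce (commonNbhd G c)).Subgraph where
  verts := {v | ↑v ∈ J.verts}
  Adj v w := J.Adj ↑v ↑w
  adj_sub := fun {v w} hvw => J.adj_sub hvw
  edge_vert := fun {v w} hvw => J.edge_vert hvw
  symm := ⟨fun v w hvw => J.symm.symm _ _ hvw⟩

lemma restrict_inj {α : Type*} {G : SimpleGraph α} {c : Finset α} {J K : G.Subgraph}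
    (hJ : ↑c ⊆ subDomSet J) (hK : ↑c ⊆ subDomSet K)
    (hΦ : restrictSub c J = restrictSub c K) : J = K := by
  have hvsub : ∀ v : ↥(commonNbhd G c), ↑v ∈ J.verts ↔ ↑v ∈ K.verts := by
    intro v
    exact iff_of_eq (congrFun (congrArg (fun S => fun x => x ∈ S)
      (congrArg SimpleGraph.Subgraph.verts hΦ)) v)
  have hadj : ∀ v w : ↥(commonNbhd G c), J.Adj ↑v ↑w ↔ K.Adj ↑v ↑w := by
    intro v w
    exact iff_of_eq (congrFun (congrFun (congrArg SimpleGraph.Subgraph.Adj hΦ) v) w)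
  have hverts : J.verts = K.verts := by
    ext v
    by_cases hvc : v ∈ c
    · exact ⟨fun _ => (hK hvc).1, fun _ => (hJ hvc).1⟩
    · constructor
      · intro hv
        exact (hvsub ⟨v, verts_mem_commonNbhd hJ hv hvc⟩).1 hv
      · intro hv
        exact (hvsub ⟨v, verts_mem_commonNbhd hK hv hvc⟩).2 hv
  have key : ∀ (L M : G.Subgraph), ↑c ⊆ subDomSet L → ↑c ⊆ subDomSet M → L.verts = M.verts →
      (∀ v w : ↥(commonNbhd G c), L.Adj ↑v ↑w → M.Adj ↑v ↑w) →
      ∀ x y, L.Adj x y → M.Adj x y := by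
    intro L M hL hM hvertsLM hadjLM x y hxy
    by_cases hx : x ∈ c
    · have hyv : y ∈ M.verts := hvertsLM ▸ L.edge_vert hxy.symm
      exact (hM hx).2 y hyv (L.adj_sub hxy).ne'
    · by_cases hy : y ∈ c
      · have hxv : x ∈ M.verts := hvertsLM ▸ L.edge_vert hxy
        exact ((hM hy).2 x hxv (L.adj_sub hxy).ne).symm
      · have hxN := verts_mem_commonNbhd hL (L.edge_vert hxy) hx
        have hyN := verts_mem_commonNbhd hL (L.edge_vert hxy.symm) hy
        exact hadjLM ⟨x, hxN⟩ ⟨y, hyN⟩ hxy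
  refine SimpleGraph.Subgraph.ext hverts ?_
  ext x y
  exact ⟨key J K hJ hK hverts (fun v w => (hadj v w).1) x y,
    key K J hK hJ hverts.symm (fun v w => (hadj v w).2) x y⟩

lemma restrict_iso {h : ℕ} {H : SimpleGraph (Fin h)} {α : Type*} {G : SimpleGraph α}
    {c : Finset α} {J : G.Subgraph} (hrc : ↑c ⊆ subDomSet J) (e : J.coe ≃g H)
    (D : Finset (Fin h)) (hD : ↑D ⊆ domSet H) (hDcard : D.card = c.card) :
    Nonempty ((restrictSub c J).coe ≃g H.induce ((↑D : Set (Fin h))ᶜ)) := by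
  classical
  have hcJ : ∀ x ∈ c, x ∈ J.verts := fun x hx => (hrc hx).1
  have hdomJ : ∀ (x : α) (hx : x ∈ c), (⟨x, hcJ x hx⟩ : ↥J.verts) ∈ domSet J.coe := by
    intro x hx w hw
    rw [SimpleGraph.Subgraph.coe_adj]
    exact (hrc hx).2 ↑w w.2 (fun hc => hw (Subtype.ext hc))
  set D' : Finset (Fin h) :=
    Finset.image (fun x : {y // y ∈ c} => e ⟨x.1, hcJ x.1 x.2⟩) c.attach with hD'
  have hD'sub : ↑D' ⊆ domSet H := by
    intro y hy
    obtain ⟨x, -, rfl⟩ := Finset.mem_image.1 (Finset.mem_coe.1 hy)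
    exact domSet_map e (hdomJ _ x.2)
  have hD'card : D'.card = c.card := by
    rw [hD', Finset.card_image_of_injOn, Finset.card_attach]
    intro x _ y _ hxy
    have h2 : (x.1 : α) = y.1 := congrArg (Subtype.val : ↥J.verts → α) (e.injective hxy)
    exact Subtype.ext h2
  have toFun_mem : ∀ v : ↥(restrictSub c J).verts,
      (e ⟨↑↑v, v.2⟩ : Fin h) ∈ ((↑D' : Set (Fin h))ᶜ) := by
    rintro ⟨⟨v, hvN⟩, hv⟩
    simp only [Set.mem_compl_iff, Finset.mem_coe]
    intro hmem
    obtain ⟨x, -, hx⟩ := Finset.mem_image.1 hmem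
    have h1 : (⟨x.1, hcJ x.1 x.2⟩ : ↥J.verts) = ⟨v, hv⟩ := e.injective hx
    have hvx : (x.1 : α) = v := congrArg Subtype.val h1
    exact commonNbhd_not_mem hvN (hvx ▸ x.2)
  set F : ↥(restrictSub c J).verts → ↥((↑D' : Set (Fin h))ᶜ) :=
    fun v => ⟨e ⟨↑↑v, v.2⟩, toFun_mem v⟩ with hF
  have hFbij : Function.Bijective F := by
    constructor
    · intro a b hab
      have h1 : (e ⟨↑↑a, a.2⟩ : Fin h) = e ⟨↑↑b, b.2⟩ := congrArg Subtype.val hab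
      have h2 := congrArg Subtype.val (e.injective h1)
      exact Subtype.ext (Subtype.ext h2)
    · rintro ⟨y, hy⟩
      set w : ↥J.verts := e.symm y with hw
      have hwc : (↑w : α) ∉ c := by
        intro hc
        rw [Set.mem_compl_iff] at hy
        apply hy
        rw [Finset.mem_coe]
        refine Finset.mem_image.mpr ⟨⟨↑w, hc⟩, Finset.mem_attach _ _, ?_⟩
        have h1 : (⟨(⟨↑w, hc⟩ : {y // y ∈ c}).1, hcJ _ hc⟩ : ↥J.verts) = w := Subtype.ext rfl
        rw [h1, hw, e.apply_symm_apply]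
      have hwN : (↑w : α) ∈ commonNbhd G c := verts_mem_commonNbhd hrc w.2 hwc
      refine ⟨⟨⟨↑w, hwN⟩, w.2⟩, ?_⟩
      apply Subtype.ext
      show (e ⟨↑(⟨↑w, hwN⟩ : ↥(commonNbhd G c)), w.2⟩ : Fin h) = y
      rw [show (⟨↑(⟨↑w, hwN⟩ : ↥(commonNbhd G c)), w.2⟩ : ↥J.verts) = w from Subtype.ext rfl,
        hw, e.apply_symm_apply]
  have iso1 : (restrictSub c J).coe ≃g H.induce ((↑D' : Set (Fin h))ᶜ) :=
    { toEquiv := Equiv.ofBijective F hFbij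
      map_rel_iff' := by
        intro a b
        simp only [Equiv.ofBijective_apply, hF, comap_adj, Function.Embedding.coe_subtype,
          SimpleGraph.Subgraph.coe_adj]
        exact e.map_adj_iff }
  exact ⟨iso1.trans (domSwapIso H D D' hD hD'sub (hDcard.trans hD'card.symm))⟩

/-! ### the subDomSet cardinality -/

lemma subDomSet_eq_image {α : Type*} {G : SimpleGraph α} (J : G.Subgraph) :
    subDomSet J = Subtype.val '' domSet J.coe := by
  ext v
  constructor
  · rintro ⟨hv, hdom⟩
    refine ⟨⟨v, hv⟩, ?_, rfl⟩
    intro w hw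
    rw [SimpleGraph.Subgraph.coe_adj]
    exact hdom ↑w w.2 (fun hc => hw (Subtype.ext hc))
  · rintro ⟨⟨v', hv'⟩, hdom, rfl⟩
    refine ⟨hv', ?_⟩
    intro w hw hne
    have := hdom ⟨w, hw⟩ (fun hc => hne (congrArg Subtype.val hc))
    rwa [SimpleGraph.Subgraph.coe_adj] at this

lemma subDomSet_ncard {α : Type*} {G : SimpleGraph α} {J : G.Subgraph} {h : ℕ}
    {H : SimpleGraph (Fin h)} (e : J.coe ≃g H) : (subDomSet J).ncard = domCount H := by
  rw [subDomSet_eq_image, Set.ncard_image_of_injective _ Subtype.val_injective]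
  exact domCount_eq_of_iso e

lemma count_le_bound {h : ℕ} (H : SimpleGraph (Fin h)) (u : ℕ)
    (D : Finset (Fin h)) (hD : ↑D ⊆ domSet H) (hDcard : D.card = u)
    (Δ ω : ℕ) (hωu : u ≤ ω)
    (hTuran : ∀ r : ℕ, ω - u ≤ r → ∀ (n : ℕ) (G' : SimpleGraph (Fin n)),
      G'.CliqueFree (r + 1) →
        _root_.copyCount (H.induce ((↑D : Set (Fin h))ᶜ)) G' ≤
          _root_.copyCount (H.induce ((↑D : Set (Fin h))ᶜ)) (turanGraph n r))
    {V : Type*} [Fintype V] (G : SimpleGraph V)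
    (hsplit : ¬ Graph.Contains (completeSplitGraph u (Δ + 1)) G)
    (hclique : G.CliqueFree (ω + 1))
    (c : Finset V) (hc : G.IsNClique u c) :
    {J : G.Subgraph | Nonempty (J.coe ≃g H) ∧ ↑c ⊆ subDomSet J}.ncard ≤
      _root_.copyCount (H.induce ((↑D : Set (Fin h))ᶜ)) (turanGraph Δ (ω - u)) := by
  classical
  -- the common neighborhood has at most Δ elements
  have hNΔ : (commonNbhd G c).ncard ≤ Δ := by
    by_contra hcon
    push_neg at hcon
    obtain ⟨M0, hM0sub, hM0card⟩ :=
      Set.exists_subset_card_eq (show Δ + 1 ≤ (commonNbhd G c).ncard from hcon)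
    have hM0fin : M0.Finite := Set.toFinite M0
    set M : Finset V := hM0fin.toFinset with hM
    have hMsub : ∀ x ∈ M, x ∈ commonNbhd G c := fun x hx =>
      hM0sub ((Set.Finite.mem_toFinset _).1 hx)
    have hMcard : M.card = Δ + 1 := by
      rw [hM, ← Set.ncard_eq_toFinset_card _ hM0fin, hM0card]
    apply hsplit
    set fc : Fin u → ↥c := ⇑(Finset.equivFinOfCardEq hc.2).symm with hfc
    set fM : Fin (Δ + 1) → ↥M := ⇑(Finset.equivFinOfCardEq hMcard).symm with hfM
    have hom_inj : Function.Injective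
        (Sum.elim (fun i => (↑(fc i) : V)) (fun j => (↑(fM j) : V))) := by
      rintro (i | i) (j | j) heq <;> simp only [Sum.elim_inl, Sum.elim_inr] at heq
      · have h1 : fc i = fc j := Subtype.ext heq
        rw [(Finset.equivFinOfCardEq hc.2).symm.injective h1]
      · exact absurd (fc i).2 (commonNbhd_not_mem (heq ▸ hMsub _ (fM j).2))
      · exact absurd (fc j).2 (commonNbhd_not_mem (heq ▸ hMsub _ (fM i).2))
      · have h1 : fM i = fM j := Subtype.ext heq
        rw [(Finset.equivFinOfCardEq hMcard).symm.injective h1]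
    refine ⟨⟨Sum.elim (fun i => ↑(fc i)) (fun j => ↑(fM j)), ?_⟩, hom_inj⟩
    · rintro (i | i) (j | j) ⟨hne, hl⟩
      · simp only [Sum.elim_inl]
        have hij : i ≠ j := fun hh => hne (by rw [hh])
        have h2 : fc i ≠ fc j := fun hh => hij ((Finset.equivFinOfCardEq hc.2).symm.injective hh)
        exact hc.1 (Finset.mem_coe.2 (fc i).2) (Finset.mem_coe.2 (fc j).2)
          (fun hv => h2 (Subtype.ext hv))
      · simp only [Sum.elim_inl, Sum.elim_inr]
        exact hMsub _ (fM j).2 _ (fc i).2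
      · simp only [Sum.elim_inl, Sum.elim_inr]
        exact (hMsub _ (fM i).2 _ (fc j).2).symm
      · exfalso
        simp at hl
  -- the induced graph on the common neighborhood is K_{ω-u+1}-free
  have hfree : (G.induce (commonNbhd G c)).CliqueFree (ω - u + 1) := by
    intro s hs
    have himcard : (s.image (Subtype.val : ↥(commonNbhd G c) → V)).card = ω - u + 1 := by
      rw [Finset.card_image_of_injective _ Subtype.val_injective, hs.2]
    have hdisj : Disjoint (s.image Subtype.val) c := by
      rw [Finset.disjoint_left]
      rintro x hx hxc
      obtain ⟨y, -, rfl⟩ := Finset.mem_image.1 hx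
      exact commonNbhd_not_mem y.2 hxc
    apply hclique (s.image Subtype.val ∪ c)
    constructor
    · intro x hx y hy hxy
      rw [Finset.coe_union, Set.mem_union] at hx hy
      rcases hx with hx | hx <;> rcases hy with hy | hy
      · obtain ⟨a, ha, rfl⟩ := Finset.mem_image.1 (Finset.mem_coe.1 hx)
        obtain ⟨b, hb, rfl⟩ := Finset.mem_image.1 (Finset.mem_coe.1 hy)
        have hab : a ≠ b := fun hh => hxy (by rw [hh])
        exact hs.1 (Finset.mem_coe.2 ha) (Finset.mem_coe.2 hb) hab
      · obtain ⟨a, ha, rfl⟩ := Finset.mem_image.1 (Finset.mem_coe.1 hx)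
        exact (a.2 y (Finset.mem_coe.1 hy)).symm
      · obtain ⟨b, hb, rfl⟩ := Finset.mem_image.1 (Finset.mem_coe.1 hy)
        exact b.2 x (Finset.mem_coe.1 hx)
      · exact hc.1 hx hy hxy
    · rw [Finset.card_union_of_disjoint hdisj, himcard, hc.2]
      omega
  -- injection into the copies in the induced graph
  have hsubfin := subgraph_finite (G.induce (commonNbhd G c))
  have step1 : {J : G.Subgraph | Nonempty (J.coe ≃g H) ∧ ↑c ⊆ subDomSet J}.ncard ≤
      _root_.copyCount (H.induce ((↑D : Set (Fin h))ᶜ)) (G.induce (commonNbhd G c)) := by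
    apply Set.ncard_le_ncard_of_injOn (restrictSub c)
    · rintro J ⟨⟨e⟩, hrc⟩
      exact restrict_iso hrc e D hD (hDcard.trans hc.2.symm)
    · intro J hJ K hK heq
      exact restrict_inj hJ.2 hK.2 heq
  -- transport to `Fin n`
  haveI : Fintype ↥(commonNbhd G c) := Fintype.ofFinite _
  have hcardN : Fintype.card ↥(commonNbhd G c) = (commonNbhd G c).ncard := by
    rw [← Nat.card_eq_fintype_card, Nat.card_coe_set_eq]
  have eqv : Fin ((commonNbhd G c).ncard) ≃ ↥(commonNbhd G c) :=
    (Fintype.equivFinOfCardEq hcardN).symm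
  have iso2 := SimpleGraph.Iso.comap eqv (G.induce (commonNbhd G c))
  have hfree'' := hfree.comap iso2.isContained
  have step2 : _root_.copyCount (H.induce ((↑D : Set (Fin h))ᶜ)) (G.induce (commonNbhd G c)) =
      _root_.copyCount (H.induce ((↑D : Set (Fin h))ᶜ))
        ((G.induce (commonNbhd G c)).comap eqv) :=
    (copyCount_eq_of_iso_right _ iso2).symm
  have step3 := hTuran (ω - u) le_rfl ((commonNbhd G c).ncard) _ hfree''
  have step4 : _root_.copyCount (H.induce ((↑D : Set (Fin h))ᶜ))
        (turanGraph ((commonNbhd G c).ncard) (ω - u)) ≤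
      _root_.copyCount (H.induce ((↑D : Set (Fin h))ᶜ)) (turanGraph Δ (ω - u)) := by
    refine copyCount_le_of_injhom _
      ⟨Fin.castLE hNΔ, ?_⟩ (Fin.castLE_injective hNΔ)
    intro a b hab
    simpa [turanGraph] using hab
  omega


/-- the upper bound
`N(H,G) ≤ N(H^{↓u}, T_{ω−u}(Δ)) · k^u(G) / C(dom H, u)` for `{K_u ∨ I_{Δ+1}, K_{ω+1}}`-free `G`. -/
theorem stmt9 {h : ℕ} (H : SimpleGraph (Fin h)) (u : ℕ) (hu : 1 ≤ u)
    (hdom : u ≤ domCount H) (D : Finset (Fin h)) (hD : ↑D ⊆ domSet H) (hDcard : D.card = u)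
    (Δ ω : ℕ) (hΔω : ω ≤ Δ) (hωu : u ≤ ω)
    (hTuran : ∀ r : ℕ, ω - u ≤ r → ∀ (n : ℕ) (G' : SimpleGraph (Fin n)),
      G'.CliqueFree (r + 1) →
        _root_.copyCount (H.induce ((↑D : Set (Fin h))ᶜ)) G' ≤
          _root_.copyCount (H.induce ((↑D : Set (Fin h))ᶜ)) (turanGraph n r))
    {V : Type*} [Fintype V] (G : SimpleGraph V)
    (hsplit : ¬ Graph.Contains (completeSplitGraph u (Δ + 1)) G)
    (hclique : G.CliqueFree (ω + 1)) :
    (domCount H).choose u * _root_.copyCount H G ≤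
      _root_.copyCount (H.induce ((↑D : Set (Fin h))ᶜ)) (turanGraph Δ (ω - u)) * kclique u G := by
  classical
  have hGsubfin := subgraph_finite G
  have hSfin : {J : G.Subgraph | Nonempty (J.coe ≃g H)}.Finite := Set.toFinite _
  have hTfin : {s : Finset V | G.IsNClique u s}.Finite := Set.toFinite _
  have claimA : ∀ J ∈ hSfin.toFinset, (domCount H).choose u ≤
      (hTfin.toFinset.bipartiteAbove (fun (J : G.Subgraph) (c : Finset V) => (↑c : Set V) ⊆ subDomSet J) J).card := by
    intro J hJ
    rw [Set.Finite.mem_toFinset] at hJ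
    obtain ⟨e⟩ := hJ
    have hcard : (Set.toFinite (subDomSet J)).toFinset.card = domCount H := by
      rw [← Set.ncard_eq_toFinset_card]
      exact subDomSet_ncard e
    rw [← hcard, ← Finset.card_powersetCard]
    apply Finset.card_le_card
    intro x hx
    rw [Finset.mem_powersetCard] at hx
    obtain ⟨hxP, hxu⟩ := hx
    have hxdom : ↑x ⊆ subDomSet J := fun v hv =>
      (Set.Finite.mem_toFinset _).1 (hxP hv)
    rw [Finset.mem_bipartiteAbove]
    refine ⟨?_, hxdom⟩
    rw [Set.Finite.mem_toFinset]
    refine ⟨?_, hxu⟩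
    intro a ha b hb hab
    exact J.adj_sub ((hxdom ha).2 b (hxdom hb).1 (Ne.symm hab))
  have claimB : ∀ c ∈ hTfin.toFinset,
      (hSfin.toFinset.bipartiteBelow (fun (J : G.Subgraph) (c : Finset V) => (↑c : Set V) ⊆ subDomSet J) c).card ≤
      _root_.copyCount (H.induce ((↑D : Set (Fin h))ᶜ)) (turanGraph Δ (ω - u)) := by
    intro c hcmem
    rw [Set.Finite.mem_toFinset] at hcmem
    have hkey := count_le_bound H u D hD hDcard Δ ω hωu hTuran G hsplit hclique c hcmem
    refine le_trans ?_ hkey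
    rw [← Set.ncard_coe_finset]
    apply le_of_eq
    congr 1
    ext J
    simp only [Finset.coe_filter, Finset.mem_coe, Finset.mem_bipartiteBelow,
      Set.Finite.mem_toFinset, Set.mem_setOf_eq]
  have key := Finset.card_mul_le_card_mul (fun (J : G.Subgraph) (c : Finset V) => (↑c : Set V) ⊆ subDomSet J) claimA claimB
  rw [_root_.copyCount, kclique, Set.ncard_eq_toFinset_card _ hSfin, Set.ncard_eq_toFinset_card _ hTfin]
  calc (domCount H).choose u * hSfin.toFinset.card
      = hSfin.toFinset.card * (domCount H).choose u := Nat.mul_comm _ _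
    _ ≤ hTfin.toFinset.card *
        _root_.copyCount (H.induce ((↑D : Set (Fin h))ᶜ)) (turanGraph Δ (ω - u)) := key
    _ = _root_.copyCount (H.induce ((↑D : Set (Fin h))ᶜ)) (turanGraph Δ (ω - u)) *
        hTfin.toFinset.card := Nat.mul_comm _ _
end

section
/- Let u ≥ 1, let H be a graph containing K_u as a subgraph, and let F be a set of connected graphs none of which is a subgraph of K_u. Suppose L is an F-free graph attaining the supremum ρ_u(H,L) = sup{N(H,G)/k^u(G) : G is F-free with k^u(G) > 0}. Then for every p that is a multiple of k^u(L), ex_u(p,H,F) = N(H, (p/k^u(L))·L), i.e., the disjoint union of p/k^u(L) copies of L is extremal. -/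
open SimpleGraph Finset Filter Topology

namespace Stmt19Aux

section helpers
variable {α W β : Type*} {G : SimpleGraph α} {G' : SimpleGraph W} {H : SimpleGraph β}

variable {α W β : Type*} {G : SimpleGraph α} {G' : SimpleGraph W} {H : SimpleGraph β}

lemma contains_of_iso (e : G ≃g G') {F : SimpleGraph β} (h : Graph.Contains F G) :
    Graph.Contains F G' := by
  obtain ⟨f, hf⟩ := h
  exact ⟨e.toHom.comp f, e.injective.comp hf⟩

lemma clique_map_iso (e : G ≃g G') {u : ℕ} {s : Finset α} (h : G.IsNClique u s) :
    G'.IsNClique u (s.map e.toEquiv.toEmbedding) := by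
  obtain ⟨hc, hcard⟩ := h
  refine ⟨?_, by simp [hcard]⟩
  intro x hx y hy hne
  simp only [Finset.coe_map, Set.mem_image, Finset.mem_coe] at hx hy
  obtain ⟨a, ha, rfl⟩ := hx
  obtain ⟨b, hb, rfl⟩ := hy
  have hab : a ≠ b := fun hh => hne (by rw [hh])
  exact e.map_adj_iff.2 (hc ha hb hab)

lemma kclique_iso (e : G ≃g G') (u : ℕ) : kclique u G = kclique u G' := by
  unfold kclique
  rw [← Nat.card_coe_set_eq, ← Nat.card_coe_set_eq]
  refine Nat.card_congr (Equiv.subtypeEquiv e.toEquiv.finsetCongr fun s => ⟨fun h => ?_, fun h => ?_⟩)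
  · simpa using clique_map_iso e h
  · have := clique_map_iso e.symm h
    rwa [Equiv.finsetCongr_apply, Finset.map_map,
      show (e.toEquiv.toEmbedding.trans e.symm.toEquiv.toEmbedding) = Function.Embedding.refl α by
        ext a; simp, Finset.map_refl] at this

/-- iso between a subgraph and its image under an injective hom -/
noncomputable def subgraphMapCoeIso (f : G →g G') (hf : Function.Injective f) (J : G.Subgraph) :
    J.coe ≃g (J.map f).coe where
  toEquiv := Equiv.Set.image f J.verts hf
  map_rel_iff' := by
    rintro ⟨a, ha⟩ ⟨b, hb⟩
    simp only [Equiv.Set.image_apply, Subgraph.coe_adj, Subgraph.map_adj, Relation.Map]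
    constructor
    · rintro ⟨x, y, hxy, hx, hy⟩
      rwa [hf hx, hf hy] at hxy
    · intro h; exact ⟨a, b, h, rfl, rfl⟩

lemma subgraph_map_injective (f : G →g G') (hf : Function.Injective f) :
    Function.Injective (SimpleGraph.Subgraph.map f) := by
  intro J₁ J₂ h
  ext v w
  · constructor
    · intro hv
      have : f v ∈ (J₁.map f).verts := Set.mem_image_of_mem f hv
      rw [h] at this
      obtain ⟨x, hx, hxv⟩ := this
      rwa [← hf hxv]
    · intro hv
      have : f v ∈ (J₂.map f).verts := Set.mem_image_of_mem f hv
      rw [← h] at this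
      obtain ⟨x, hx, hxv⟩ := this
      rwa [← hf hxv]
  · constructor
    · intro hv
      have : (J₁.map f).Adj (f v) (f w) := ⟨v, w, hv, rfl, rfl⟩
      rw [h] at this
      obtain ⟨x, y, hxy, hx, hy⟩ := this
      rwa [hf hx, hf hy] at hxy
    · intro hv
      have : (J₂.map f).Adj (f v) (f w) := ⟨v, w, hv, rfl, rfl⟩
      rw [← h] at this
      obtain ⟨x, y, hxy, hx, hy⟩ := this
      rwa [hf hx, hf hy] at hxy

lemma copyCount_iso (e : G ≃g G') : _root_.copyCount H G = _root_.copyCount H G' := by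
  unfold _root_.copyCount
  rw [← Nat.card_coe_set_eq, ← Nat.card_coe_set_eq]
  have key : ∀ (J : G.Subgraph), (J.map e.toHom).map e.symm.toHom = J := by
    intro J
    rw [← SimpleGraph.Subgraph.map_comp]
    have : (e.symm.toHom.comp e.toHom) = SimpleGraph.Hom.id := by
      ext v; simp
    rw [this, SimpleGraph.Subgraph.map_id]
  have key' : ∀ (J : G'.Subgraph), (J.map e.symm.toHom).map e.toHom = J := by
    intro J
    rw [← SimpleGraph.Subgraph.map_comp]
    have : (e.toHom.comp e.symm.toHom) = SimpleGraph.Hom.id := by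
      ext v; simp
    rw [this, SimpleGraph.Subgraph.map_id]
  refine Nat.card_congr ⟨fun J => ⟨J.1.map e.toHom, ?_⟩, fun J => ⟨J.1.map e.symm.toHom, ?_⟩,
    fun J => Subtype.ext (key J.1), fun J => Subtype.ext (key' J.1)⟩
  · exact J.2.map fun φ => φ.comp (subgraphMapCoeIso e.toHom e.injective J.1).symm
  · exact J.2.map fun φ => φ.comp (subgraphMapCoeIso e.symm.toHom e.symm.injective J.1).symm

end helpers

section sigma
variable {q l : ℕ} {L : SimpleGraph (Fin l)}

variable {q l : ℕ} {L : SimpleGraph (Fin l)}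

local notation "S" => sigmaGraph (fun _ : Fin q => L)

lemma sadj_fst {x y : Σ _ : Fin q, Fin l} (h : (S).Adj x y) : x.1 = y.1 := by
  obtain ⟨i, a, b, rfl, rfl, -⟩ := h; rfl

lemma sadj_snd {x y : Σ _ : Fin q, Fin l} (h : (S).Adj x y) : L.Adj x.2 y.2 := by
  obtain ⟨i, a, b, rfl, rfl, hab⟩ := h; exact hab

/-- inclusion hom of the i-th summand -/
def sigmaHom (i : Fin q) : L →g (S) where
  toFun a := ⟨i, a⟩
  map_rel' := fun h => ⟨i, _, _, rfl, rfl, h⟩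

lemma sigmaMk_injective {i : Fin q} :
    Function.Injective (fun a : Fin l => (⟨i, a⟩ : Σ _ : Fin q, Fin l)) := by
  intro a b h
  exact congrArg Sigma.snd h

lemma sigmaHom_injective (i : Fin q) : Function.Injective (sigmaHom (L := L) i) := by
  intro a b h
  exact congrArg Sigma.snd h

lemma kclique_sigma (u : ℕ) (hu : 1 ≤ u) :
    kclique u (S) = q * kclique u L := by
  unfold kclique
  have mem : ∀ p : Fin q × ↑{s : Finset (Fin l) | L.IsNClique u s},
      (S).IsNClique u (p.2.1.map ⟨fun a => ⟨p.1, a⟩, sigmaMk_injective⟩) := by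
    rintro ⟨i, s, hc, hcard⟩
    refine ⟨?_, by simp [hcard]⟩
    intro x hx y hy hne
    simp only [Finset.coe_map, Set.mem_image, Finset.mem_coe] at hx hy
    obtain ⟨a, ha, rfl⟩ := hx
    obtain ⟨b, hb, rfl⟩ := hy
    have hab : a ≠ b := fun hh => hne (by rw [hh])
    exact ⟨i, a, b, rfl, rfl, hc ha hb hab⟩
  let f : (Fin q × ↑{s : Finset (Fin l) | L.IsNClique u s}) →
      ↑{s : Finset (Σ _ : Fin q, Fin l) | (S).IsNClique u s} :=
    fun p => ⟨p.2.1.map ⟨fun a => ⟨p.1, a⟩, sigmaMk_injective⟩, mem p⟩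
  have hinj : Function.Injective f := by
    rintro ⟨i₁, s₁, hs₁⟩ ⟨i₂, s₂, hs₂⟩ h
    simp only [f, Subtype.mk.injEq] at h
    have hs₁ne : s₁.Nonempty := by
      rw [← Finset.card_pos, hs₁.card_eq]; omega
    obtain ⟨a, ha⟩ := hs₁ne
    have : (⟨i₁, a⟩ : Σ _ : Fin q, Fin l) ∈ s₂.map ⟨fun a => ⟨i₂, a⟩, sigmaMk_injective⟩ := by
      rw [← h]; exact Finset.mem_map_of_mem _ ha
    obtain ⟨b, hb, hba⟩ := Finset.mem_map.1 this
    have hi : i₂ = i₁ := congrArg Sigma.fst hba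
    subst hi
    have hss : s₁ = s₂ := Finset.map_injective _ h
    simp [hss]
  have hsurj : Function.Surjective f := by
    rintro ⟨t, ht⟩
    have ht' : (S).IsNClique u t := ht
    have htne : t.Nonempty := by
      rw [← Finset.card_pos, ht'.card_eq]; omega
    obtain ⟨x, hx⟩ := htne
    have hfst : ∀ y ∈ t, y.1 = x.1 := by
      intro y hy
      rcases eq_or_ne y x with rfl | hne
      · rfl
      · exact sadj_fst (ht'.1 hy hx hne)
    have hcl : L.IsNClique u (t.image Sigma.snd) := by
      constructor
      · intro a ha b hb hne
        simp only [Finset.coe_image, Set.mem_image, Finset.mem_coe] at ha hb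
        obtain ⟨y, hy, rfl⟩ := ha
        obtain ⟨z, hz, rfl⟩ := hb
        have hyz : y ≠ z := fun hh => hne (by rw [hh])
        exact sadj_snd (ht'.1 hy hz hyz)
      · rw [Finset.card_image_of_injOn, ht'.card_eq]
        intro y hy z hz hyz
        have : y.1 = z.1 := (hfst y hy).trans (hfst z hz).symm
        exact Sigma.ext this (heq_of_eq hyz)
    refine ⟨⟨x.1, ⟨t.image Sigma.snd, Set.mem_setOf_eq ▸ hcl⟩⟩, Subtype.ext ?_⟩
    ext z
    simp only [f, Finset.mem_map, Finset.mem_image, Function.Embedding.coeFn_mk]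
    constructor
    · rintro ⟨a, ⟨y, hy, rfl⟩, rfl⟩
      have : (⟨x.1, y.2⟩ : Σ _ : Fin q, Fin l) = y := by
        rw [← hfst y hy]
      rwa [this]
    · intro hz
      refine ⟨z.2, ⟨z, hz, rfl⟩, ?_⟩
      rw [← hfst z hz]
  rw [← Nat.card_coe_set_eq, ← Nat.card_coe_set_eq,
    Nat.card_congr (Equiv.ofBijective f ⟨hinj, hsurj⟩).symm, Nat.card_prod,
    Nat.card_eq_fintype_card, Fintype.card_fin]



-- reachability implies constant fiber under a hom into the sigma graph
lemma fst_const_of_reachable {β : Type*} {Γ : SimpleGraph β} (f : Γ →g (S)) {a b : β}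
    (h : Γ.Reachable a b) : (f a).1 = (f b).1 := by
  obtain ⟨p⟩ := h
  induction p with
  | nil => rfl
  | cons hadj _ ih => exact (sadj_fst (f.map_rel hadj)).trans ih

lemma sigma_free {γ : Type*} {F : SimpleGraph γ} (hFc : F.Connected)
    (hL : ¬ Graph.Contains F L) : ¬ Graph.Contains F (S) := by
  rintro ⟨f, hf⟩
  apply hL
  refine ⟨⟨fun w => (f w).2, fun hadj => sadj_snd (f.map_rel hadj)⟩, ?_⟩
  intro a b hab
  apply hf
  exact Sigma.ext (fst_const_of_reachable f (hFc a b)) (heq_of_eq hab)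

-- inside a copy of a connected graph, all vertices are in the same summand
lemma verts_fst_const {h : ℕ} {H : SimpleGraph (Fin h)} (hHconn : H.Connected)
    {J : (S).Subgraph} (φ : J.coe ≃g H) :
    ∀ a b : J.verts, (a : Σ _ : Fin q, Fin l).1 = (b : Σ _ : Fin q, Fin l).1 := by
  intro a b
  have hr : J.coe.Reachable a b := by
    have := (hHconn (φ a) (φ b)).map φ.symm.toHom
    simpa using this
  obtain ⟨p⟩ := hr
  induction p with
  | nil => rfl
  | cons hadj _ ih => exact (sadj_fst (J.adj_sub hadj)).trans ih

lemma copyCount_sigma {h : ℕ} {H : SimpleGraph (Fin h)} (hHconn : H.Connected) :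
    _root_.copyCount H (S) = q * _root_.copyCount H L := by
  unfold _root_.copyCount
  have hHne : Nonempty (Fin h) := hHconn.nonempty
  have memf : ∀ p : Fin q × ↑{J : L.Subgraph | Nonempty (J.coe ≃g H)},
      (p.2.1.map (sigmaHom p.1)) ∈ {J : (S).Subgraph | Nonempty (J.coe ≃g H)} := by
    rintro ⟨i, J, hJ⟩
    exact hJ.map fun φ => φ.comp (subgraphMapCoeIso (sigmaHom i) (sigmaHom_injective i) J).symm
  let f : (Fin q × ↑{J : L.Subgraph | Nonempty (J.coe ≃g H)}) →
      ↑{J : (S).Subgraph | Nonempty (J.coe ≃g H)} :=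
    fun p => ⟨p.2.1.map (sigmaHom p.1), memf p⟩
  have hvne : ∀ (J : L.Subgraph), Nonempty (J.coe ≃g H) → J.verts.Nonempty := by
    rintro J ⟨φ⟩
    exact ⟨(φ.symm hHne.some : J.verts).1, (φ.symm hHne.some).2⟩
  have hinj : Function.Injective f := by
    rintro ⟨i₁, J₁, hJ₁⟩ ⟨i₂, J₂, hJ₂⟩ hEq
    simp only [f, Subtype.mk.injEq] at hEq
    obtain ⟨a, ha⟩ := hvne J₁ hJ₁
    have : (⟨i₁, a⟩ : Σ _ : Fin q, Fin l) ∈ (J₂.map (sigmaHom i₂)).verts := by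
      rw [← hEq]; exact Set.mem_image_of_mem _ ha
    obtain ⟨b, hb, hba⟩ := this
    have hi : i₂ = i₁ := congrArg Sigma.fst hba
    subst hi
    have hJJ : J₁ = J₂ := subgraph_map_injective (sigmaHom i₂) (sigmaHom_injective i₂) hEq
    simp [hJJ]
  have hsurj : Function.Surjective f := by
    rintro ⟨J', hJ'⟩
    have hJ'' : Nonempty (J'.coe ≃g H) := hJ'
    obtain ⟨φ⟩ := hJ''
    have hfst := verts_fst_const hHconn φ
    obtain ⟨x, hx⟩ : J'.verts.Nonempty := ⟨(φ.symm hHne.some : J'.verts).1, (φ.symm hHne.some).2⟩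
    set i := x.1 with hi
    have hfst' : ∀ y ∈ J'.verts, y.1 = i := fun y hy => hfst ⟨y, hy⟩ ⟨x, hx⟩
    let J : L.Subgraph :=
      { verts := Sigma.snd '' J'.verts
        Adj := fun a b => J'.Adj ⟨i, a⟩ ⟨i, b⟩
        adj_sub := fun hab => sadj_snd (J'.adj_sub hab)
        edge_vert := fun hab => ⟨_, J'.edge_vert hab, rfl⟩
        symm := ⟨fun a b hab => J'.adj_symm hab⟩ }
    have hmap : J.map (sigmaHom i) = J' := by
      have hkey : ∀ z ∈ J'.verts, (⟨i, z.2⟩ : Σ _ : Fin q, Fin l) = z := by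
        intro z hz
        rw [← hfst' z hz]
      ext z w
      · constructor
        · rintro ⟨a, ⟨y, hy, rfl⟩, rfl⟩
          show (⟨i, y.2⟩ : Σ _ : Fin q, Fin l) ∈ J'.verts
          rw [hkey y hy]; exact hy
        · intro hz
          exact ⟨z.2, ⟨z, hz, rfl⟩, hkey z hz⟩
      · constructor
        · rintro ⟨a, b, hab, rfl, rfl⟩
          exact hab
        · intro hzw
          refine ⟨z.2, w.2, ?_, hkey z (J'.edge_vert hzw), hkey w (J'.edge_vert (J'.adj_symm hzw))⟩
          show J'.Adj ⟨i, z.2⟩ ⟨i, w.2⟩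
          rw [hkey z (J'.edge_vert hzw), hkey w (J'.edge_vert (J'.adj_symm hzw))]
          exact hzw
    have hX : Nonempty ((J.map (sigmaHom i)).coe ≃g H) := by rw [hmap]; exact ⟨φ⟩
    have hJmem : Nonempty (J.coe ≃g H) :=
      hX.map fun ψ => ψ.comp (subgraphMapCoeIso (sigmaHom i) (sigmaHom_injective i) J)
    exact ⟨⟨i, J, hJmem⟩, Subtype.ext hmap⟩
  rw [← Nat.card_coe_set_eq, ← Nat.card_coe_set_eq,
    Nat.card_congr (Equiv.ofBijective f ⟨hinj, hsurj⟩).symm, Nat.card_prod,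
    Nat.card_eq_fintype_card, Fintype.card_fin]

end sigma

lemma copy_to_clique {n u h' : ℕ} {G : SimpleGraph (Fin n)} {H : SimpleGraph (Fin h')}
    (hHK : Graph.Contains (⊤ : SimpleGraph (Fin u)) H) (hc : _root_.copyCount H G ≠ 0) :
    kclique u G ≠ 0 := by
  obtain ⟨J, hJ⟩ := Set.nonempty_of_ncard_ne_zero hc
  obtain ⟨φ⟩ := hJ
  obtain ⟨k, hk⟩ := hHK
  let f : (⊤ : SimpleGraph (Fin u)) →g G := J.hom.comp (φ.symm.toHom.comp k)
  have hf : Function.Injective f := by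
    intro a b hab
    exact hk (φ.symm.injective (Subtype.ext hab))
  have hclique : G.IsNClique u (Finset.univ.map ⟨f, hf⟩) := by
    constructor
    · intro x hx y hy hne
      simp only [Finset.coe_map, Set.mem_image, Finset.coe_univ, Set.image_univ,
        Set.mem_range] at hx hy
      obtain ⟨a, rfl⟩ := hx
      obtain ⟨b, rfl⟩ := hy
      have hab : a ≠ b := fun hh => hne (by rw [hh])
      exact f.map_rel ((SimpleGraph.top_adj a b).2 hab)
    · simp
  intro h0
  unfold kclique at h0
  rw [Set.ncard_eq_zero (Set.toFinite _)] at h0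
  have : (Finset.univ.map ⟨f, hf⟩) ∈ {s : Finset (Fin n) | G.IsNClique u s} := hclique
  rw [h0] at this
  exact this

end Stmt19Aux

/-- if `L` is an `F`-free graph attaining the supremum of `ρ_u(H,·)`, then
disjoint unions of copies of `L` are extremal: `ex_u(q·k^u(L), H, F) = N(H, q·L)`. -/
theorem stmt19 {ι : Type*} {γ : ι → Type*} (F : ∀ i, SimpleGraph (γ i))
    (hconn : ∀ i, (F i).Connected) (u : ℕ) (hu : 1 ≤ u)
    {h : ℕ} (H : SimpleGraph (Fin h)) (hHK : Graph.Contains (⊤ : SimpleGraph (Fin u)) H)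
    (hHconn : H.Connected)
    (hnotKu : ∀ i, ¬ Graph.Contains (F i) (⊤ : SimpleGraph (Fin u)))
    {l : ℕ} (L : SimpleGraph (Fin l)) (hLfree : ∀ i, ¬ Graph.Contains (F i) L)
    (hLpos : 0 < kclique u L)
    (hsup : ∀ (n : ℕ) (G : SimpleGraph (Fin n)), (∀ i, ¬ Graph.Contains (F i) G) →
      0 < kclique u G → _root_.copyCount H G * kclique u L ≤ _root_.copyCount H L * kclique u G)
    (hbdd : ∀ p : ℕ, BddAbove {N | ∃ (n : ℕ) (G : SimpleGraph (Fin n)),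
      (∀ i, ¬ Graph.Contains (F i) G) ∧ kclique u G = p ∧ _root_.copyCount H G = N})
    (q : ℕ) :
    exu u (q * kclique u L) H F = _root_.copyCount H (sigmaGraph fun _ : Fin q => L) := by 
  classical
  have hkS : kclique u (sigmaGraph fun _ : Fin q => L) = q * kclique u L :=
    Stmt19Aux.kclique_sigma u hu
  have hcS : _root_.copyCount H (sigmaGraph fun _ : Fin q => L) = q * _root_.copyCount H L :=
    Stmt19Aux.copyCount_sigma hHconn
  have hfree : ∀ i, ¬ Graph.Contains (F i) (sigmaGraph fun _ : Fin q => L) :=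
    fun i => Stmt19Aux.sigma_free (hconn i) (hLfree i)
  let e := Fintype.equivFin (Σ _ : Fin q, Fin l)
  let G₀ := (sigmaGraph fun _ : Fin q => L).map e.toEmbedding
  have iso : (sigmaGraph fun _ : Fin q => L) ≃g G₀ := SimpleGraph.Iso.map e _
  have hmem : _root_.copyCount H (sigmaGraph fun _ : Fin q => L) ∈
      {N | ∃ (n : ℕ) (G : SimpleGraph (Fin n)),
        (∀ i, ¬ Graph.Contains (F i) G) ∧ kclique u G = q * kclique u L ∧ _root_.copyCount H G = N} :=
    ⟨_, G₀, fun i hcont => hfree i (Stmt19Aux.contains_of_iso iso.symm hcont),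
      by rw [← Stmt19Aux.kclique_iso iso u, hkS], (Stmt19Aux.copyCount_iso iso).symm⟩
  unfold exu
  apply le_antisymm
  · refine csSup_le ⟨_, hmem⟩ ?_
    rintro N ⟨n, G, hGfree, hkG, rfl⟩
    rw [hcS]
    rcases Nat.eq_zero_or_pos q with rfl | hq
    · simp only [Nat.zero_mul] at hkG ⊢
      rw [Nat.le_zero]
      by_contra hne
      exact (Stmt19Aux.copy_to_clique hHK hne) hkG
    · have hkpos : 0 < kclique u G := by rw [hkG]; exact Nat.mul_pos hq hLpos
      have hs := hsup n G hGfree hkpos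
      rw [hkG] at hs
      have h2 : _root_.copyCount H G * kclique u L ≤ (q * _root_.copyCount H L) * kclique u L := by
        calc _root_.copyCount H G * kclique u L ≤ _root_.copyCount H L * (q * kclique u L) := hs
        _ = (q * _root_.copyCount H L) * kclique u L := by ring
      exact Nat.le_of_mul_le_mul_right h2 hLpos
  · exact le_csSup (hbdd _) hmem
end
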